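/- For finite sets K and L, the double sum over all subsets I ⊆ K and J ⊆ L of (-2)^{|I|+|J|} · 2^{-|I ∪ J|} equals 1 if K = L and 0 otherwise. -/

import Mathlib

open Finset

lemma neg_one_sum {α : Type*} [DecidableEq α] (L : Finset α) :
    ∑ J ∈ L.powerset, (-1 : ℚ) ^ J.card = if L = ∅ then 1 else 0 := by
  have h := Finset.sum_powerset_neg_one_pow_card (x := L)
  have h2 := congrArg (fun z : ℤ => (z : ℚ)) h
  push_cast at h2
  convert h2 using 2

lemma f_insert_left {α : Type*} [DecidableEq α] {a : α} {I J : Finset α}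
    (hI : a ∉ I) (hJ : a ∉ J) :
    (-2 : ℚ) ^ ((insert a I).card + J.card) * (2 : ℚ) ^ (-(((insert a I) ∪ J).card : ℤ)) =
      -((-2 : ℚ) ^ (I.card + J.card) * (2 : ℚ) ^ (-((I ∪ J).card : ℤ))) := by
  have hU : a ∉ I ∪ J := by simp [hI, hJ]
  rw [insert_union, card_insert_of_notMem hI, card_insert_of_notMem hU]
  push_cast
  rw [neg_add, zpow_add₀ (by norm_num : (2:ℚ) ≠ 0)]
  ring_nf

lemma f_insert_right {α : Type*} [DecidableEq α] {a : α} {I J : Finset α}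
    (hI : a ∉ I) (hJ : a ∉ J) :
    (-2 : ℚ) ^ (I.card + (insert a J).card) * (2 : ℚ) ^ (-((I ∪ insert a J).card : ℤ)) =
      -((-2 : ℚ) ^ (I.card + J.card) * (2 : ℚ) ^ (-((I ∪ J).card : ℤ))) := by
  have hU : a ∉ I ∪ J := by simp [hI, hJ]
  rw [union_insert, card_insert_of_notMem hJ, card_insert_of_notMem hU]
  push_cast
  rw [neg_add, zpow_add₀ (by norm_num : (2:ℚ) ≠ 0)]
  ring_nf

lemma f_insert_both {α : Type*} [DecidableEq α] {a : α} {I J : Finset α}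
    (hI : a ∉ I) (hJ : a ∉ J) :
    (-2 : ℚ) ^ ((insert a I).card + (insert a J).card) *
        (2 : ℚ) ^ (-(((insert a I) ∪ insert a J).card : ℤ)) =
      2 * ((-2 : ℚ) ^ (I.card + J.card) * (2 : ℚ) ^ (-((I ∪ J).card : ℤ))) := by
  have hU : a ∉ I ∪ J := by simp [hI, hJ]
  rw [insert_union, union_insert, insert_idem, card_insert_of_notMem hI,
    card_insert_of_notMem hJ, card_insert_of_notMem hU]
  push_cast
  rw [neg_add, zpow_add₀ (by norm_num : (2:ℚ) ≠ 0)]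
  ring_nf

theorem stmt_2 {α : Type*} [DecidableEq α] (K L : Finset α) :
    ∑ I ∈ K.powerset, ∑ J ∈ L.powerset,
      (-2 : ℚ) ^ (I.card + J.card) * (2 : ℚ) ^ (-((I ∪ J).card : ℤ)) =
      if K = L then 1 else 0 := by
  induction K using Finset.induction_on generalizing L with
  | empty =>
    rw [Finset.powerset_empty, Finset.sum_singleton]
    have h : ∀ J ∈ L.powerset,
        (-2 : ℚ) ^ ((∅ : Finset α).card + J.card) * (2:ℚ) ^ (-(((∅ : Finset α) ∪ J).card : ℤ))
          = (-1 : ℚ) ^ J.card := by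
      intro J _
      rw [Finset.card_empty, Finset.empty_union, zero_add, neg_pow, zpow_neg,
        mul_assoc, ← zpow_natCast (2:ℚ)]
      rw [mul_inv_cancel₀ (by positivity), mul_one]
    rw [Finset.sum_congr rfl h, neg_one_sum]
    simp [eq_comm]
  | @insert a K ha IH =>
    rw [Finset.sum_powerset_insert ha]
    by_cases haL : a ∈ L
    · obtain ⟨L', haL', rfl⟩ : ∃ L', a ∉ L' ∧ L = insert a L' :=
        ⟨L.erase a, notMem_erase a L, (insert_erase haL).symm⟩
      have hA : ∑ I ∈ K.powerset, ∑ J ∈ (insert a L').powerset,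
          (-2 : ℚ) ^ (I.card + J.card) * (2 : ℚ) ^ (-((I ∪ J).card : ℤ)) = 0 := by
        refine Finset.sum_eq_zero fun I hI => ?_
        have hIa : a ∉ I := fun h => ha (Finset.mem_powerset.mp hI h)
        rw [Finset.sum_powerset_insert haL',
          Finset.sum_congr rfl fun J hJ =>
            f_insert_right hIa (fun h => haL' (Finset.mem_powerset.mp hJ h)),
          Finset.sum_neg_distrib, add_neg_cancel]
      have hB : ∑ I ∈ K.powerset, ∑ J ∈ (insert a L').powerset,
          (-2 : ℚ) ^ ((insert a I).card + J.card) *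
            (2 : ℚ) ^ (-(((insert a I) ∪ J).card : ℤ))
          = ∑ I ∈ K.powerset, ∑ J ∈ L'.powerset,
          (-2 : ℚ) ^ (I.card + J.card) * (2 : ℚ) ^ (-((I ∪ J).card : ℤ)) := by
        refine Finset.sum_congr rfl fun I hI => ?_
        have hIa : a ∉ I := fun h => ha (Finset.mem_powerset.mp hI h)
        rw [Finset.sum_powerset_insert haL',
          Finset.sum_congr rfl fun J hJ =>
            f_insert_left hIa (fun h => haL' (Finset.mem_powerset.mp hJ h)),
          Finset.sum_congr rfl fun J hJ =>
            f_insert_both hIa (fun h => haL' (Finset.mem_powerset.mp hJ h)),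
          Finset.sum_neg_distrib, ← Finset.mul_sum]
        ring
      rw [hA, hB, zero_add, IH]
      have hiff : K = L' ↔ insert a K = insert a L' := by
        constructor
        · intro h; rw [h]
        · intro h
          have h2 := congrArg (·.erase a) h
          simpa [Finset.erase_insert ha, Finset.erase_insert haL'] using h2
      simp only [hiff]
    · have hB : ∑ I ∈ K.powerset, ∑ J ∈ L.powerset,
          (-2 : ℚ) ^ ((insert a I).card + J.card) *
            (2 : ℚ) ^ (-(((insert a I) ∪ J).card : ℤ))
          = -∑ I ∈ K.powerset, ∑ J ∈ L.powerset,
          (-2 : ℚ) ^ (I.card + J.card) * (2 : ℚ) ^ (-((I ∪ J).card : ℤ)) := by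
        rw [← Finset.sum_neg_distrib]
        refine Finset.sum_congr rfl fun I hI => ?_
        have hIa : a ∉ I := fun h => ha (Finset.mem_powerset.mp hI h)
        rw [← Finset.sum_neg_distrib]
        exact Finset.sum_congr rfl fun J hJ =>
          f_insert_left hIa (fun h => haL (Finset.mem_powerset.mp hJ h))
      rw [hB, add_neg_cancel, eq_comm]
      have : insert a K ≠ L := fun h => haL (h ▸ Finset.mem_insert_self a K)
      simp [this]
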